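/- arXiv:math/0305027 — 2 statements merged into one kernel-verified Lean document; each statement's English description precedes it below -/
import Mathlib

section
/- Let f be a strictly convex twice differentiable function defined on an open convex subset D of ℝⁿ. Then there exists a point x in D at which the Hessian of f is positive definite. -/
open Set Metric Filter Topology

section Helpers

variable {E : Type*} [NormedAddCommGroup E] [NormedSpace ℝ E]

/-- Tangent line inequality for convex functions (nonstrict). -/
lemma convexOn_tangent_le {D : Set E} {f : E → ℝ} (hf : ConvexOn ℝ D f)
    {x y : E} {ℓ : E →L[ℝ] ℝ} (hx : x ∈ D) (hy : y ∈ D)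
    (hd : HasFDerivAt f ℓ x) : ℓ (y - x) ≤ f y - f x := by
  set F : ℝ → ℝ := fun t => f (x + t • (y - x)) with hFdef
  have hline : HasDerivAt (fun t : ℝ => x + t • (y - x)) (y - x) 0 := by
    simpa using ((hasDerivAt_id (0:ℝ)).smul_const (y - x)).const_add x
  have hF : HasDerivAt F (ℓ (y - x)) 0 := by
    have h0 : HasFDerivAt f ℓ (x + (0:ℝ) • (y - x)) := by simpa using hd
    exact h0.comp_hasDerivAt (0:ℝ) hline
  have hT : Tendsto (slope F 0) (𝓝[>] 0) (𝓝 (ℓ (y - x))) :=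
    (hasDerivAt_iff_tendsto_slope.1 hF).mono_left
      (nhdsWithin_mono _ (fun t ht => ne_of_gt ht))
  refine le_of_tendsto hT ?_
  filter_upwards [Ioc_mem_nhdsGT one_pos] with t ht
  have ht0 : (0:ℝ) < t := ht.1
  have hcomb : F t ≤ (1 - t) * f x + t * f y := by
    have := hf.2 hx hy (by linarith [ht.2] : (0:ℝ) ≤ 1 - t) ht0.le (by ring)
    have hxe : x + t • (y - x) = (1 - t) • x + t • y := by
      simp [smul_sub, sub_smul]; abel
    simpa [hFdef, hxe] using this
  have hF0 : F 0 = f x := by simp [hFdef]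
  have hs : slope F 0 t = (F t - f x) / t := by
    rw [slope_def_field, hF0, sub_zero]
  rw [hs, div_le_iff₀ ht0]
  nlinarith

/-- Strict tangent line inequality for strictly convex functions. -/
lemma strictConvexOn_tangent_lt {D : Set E} {f : E → ℝ} (hf : StrictConvexOn ℝ D f)
    {x y : E} {ℓ : E →L[ℝ] ℝ} (hx : x ∈ D) (hy : y ∈ D) (hxy : y ≠ x)
    (hd : HasFDerivAt f ℓ x) : ℓ (y - x) < f y - f x := by
  set z : E := (1/2 : ℝ) • x + (1/2 : ℝ) • y with hzdef
  have hz : z ∈ D := hf.1 hx hy (by norm_num) (by norm_num) (by norm_num)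
  have hzx : z - x = (1/2 : ℝ) • (y - x) := by
    simp [hzdef, smul_sub, sub_smul]
    module
  have h1 : ℓ (z - x) ≤ f z - f x := convexOn_tangent_le hf.convexOn hx hz hd
  have h2 : f z < (1/2 : ℝ) * f x + (1/2 : ℝ) * f y :=
    hf.2 hx hy (Ne.symm hxy) (by norm_num) (by norm_num) (by norm_num)
  have h3 : ℓ (z - x) = (1/2 : ℝ) * ℓ (y - x) := by
    rw [hzx, map_smul]; simp
  nlinarith [h1, h2, h3]

/-- Second derivative test: at a local min, the second derivative form is PSD. -/
lemma isLocalMin_second_psd {g : E → ℝ} {G : E → E →L[ℝ] ℝ} {H : E →L[ℝ] E →L[ℝ] ℝ}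
    {c : E} (hG : ∀ᶠ x in 𝓝 c, HasFDerivAt g (G x) x) (hH : HasFDerivAt G H c)
    (hmin : IsLocalMin g c) (v : E) : 0 ≤ H v v := by
  by_contra hneg
  push_neg at hneg
  set ψ : ℝ → ℝ := fun t => G (c + t • v) v with hψdef
  have hline : ∀ a : ℝ, HasDerivAt (fun t : ℝ => c + t • v) v a := fun a => by
    simpa using ((hasDerivAt_id a).smul_const v).const_add c
  have hψ : HasDerivAt ψ (H v v) 0 := by
    have h1 : HasDerivAt (fun t : ℝ => G (c + t • v)) (H v) 0 := by
      have h0 : HasFDerivAt G H (c + (0:ℝ) • v) := by simpa using hH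
      exact h0.comp_hasDerivAt (0:ℝ) (hline 0)
    simpa using h1.clm_apply (hasDerivAt_const (0:ℝ) v)
  have hψ0 : ψ 0 = 0 := by
    have h0 : HasFDerivAt g (G c) c := hG.self_of_nhds
    have := hmin.hasFDerivAt_eq_zero h0
    simp [hψdef, this]
  have hTs : Tendsto (slope ψ 0) (𝓝[>] 0) (𝓝 (H v v)) :=
    (hasDerivAt_iff_tendsto_slope.1 hψ).mono_left
      (nhdsWithin_mono _ (fun t ht => ne_of_gt ht))
  have hev1 : ∀ᶠ t in 𝓝[>] (0:ℝ), ψ t < 0 := by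
    have hs : ∀ᶠ t in 𝓝[>] (0:ℝ), slope ψ 0 t < 0 :=
      hTs.eventually (Filter.Tendsto.eventually_lt_const hneg tendsto_id)
    filter_upwards [hs, self_mem_nhdsWithin] with t hst ht
    have ht0 : (0:ℝ) < t := ht
    have hd : ψ t / t < 0 := by
      have := hst
      rw [slope_def_field, hψ0, sub_zero, sub_zero] at this
      exact this
    rcases div_neg_iff.1 hd with h | h
    · linarith [h.2]
    · exact h.1
  have hmap : Tendsto (fun t : ℝ => c + t • v) (𝓝 0) (𝓝 c) := by
    have hcont : Continuous (fun t : ℝ => c + t • v) := by continuity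
    simpa using hcont.tendsto 0
  have hev2 : ∀ᶠ t in 𝓝 (0:ℝ), HasFDerivAt g (G (c + t • v)) (c + t • v) :=
    hmap.eventually hG
  have hev3 : ∀ᶠ t in 𝓝 (0:ℝ), g c ≤ g (c + t • v) := hmap.eventually hmin
  have hall : ∀ᶠ t in 𝓝[>] (0:ℝ),
      ψ t < 0 ∧ HasFDerivAt g (G (c + t • v)) (c + t • v) ∧ g c ≤ g (c + t • v) := by
    filter_upwards [hev1, hev2.filter_mono nhdsWithin_le_nhds,
      hev3.filter_mono nhdsWithin_le_nhds] with t h1 h2 h3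
    exact ⟨h1, h2, h3⟩
  obtain ⟨δ, hδ0, hδ⟩ := mem_nhdsGT_iff_exists_Ioc_subset.1 hall
  have hδ0 : (0:ℝ) < δ := hδ0
  set h : ℝ → ℝ := fun t => g (c + t • v) with hhdef
  have hderiv : ∀ t ∈ Icc (0:ℝ) δ, HasDerivAt h (ψ t) t := by
    intro t ht
    rcases eq_or_lt_of_le ht.1 with rfl | htpos
    · have h0 : HasFDerivAt g (G (c + (0:ℝ) • v)) (c + (0:ℝ) • v) := by
        simpa using hG.self_of_nhds
      exact h0.comp_hasDerivAt (0:ℝ) (hline 0)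
    · exact (hδ ⟨htpos, ht.2⟩).2.1.comp_hasDerivAt _ (hline _)
  have hanti : StrictAntiOn h (Icc 0 δ) := by
    apply strictAntiOn_of_deriv_neg (convex_Icc _ _)
    · exact fun t ht => (hderiv t ht).continuousAt.continuousWithinAt
    · intro t ht
      rw [interior_Icc] at ht
      rw [(hderiv t ⟨ht.1.le, ht.2.le⟩).deriv]
      exact (hδ ⟨ht.1, ht.2.le⟩).1
  have h1 : h δ < h 0 := hanti ⟨le_rfl, hδ0.le⟩ ⟨hδ0.le, le_rfl⟩ hδ0
  have h2 : g c ≤ h δ := (hδ ⟨hδ0, le_rfl⟩).2.2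
  have h3 : h 0 = g c := by simp [hhdef]
  linarith

end Helpers

section Quad

variable {E : Type*} [NormedAddCommGroup E] [InnerProductSpace ℝ E]

local notation "⟪" x ", " y "⟫" => @inner ℝ _ _ x y

lemma hasFDerivAt_quad (x₀ x : E) :
    HasFDerivAt (fun x => ⟪x - x₀, x - x₀⟫)
      ((2:ℝ) • (innerSL ℝ (x - x₀))) x := by
  have hu : HasFDerivAt (fun y : E => y - x₀) (ContinuousLinearMap.id ℝ E) x :=
    (hasFDerivAt_id x).sub_const x₀
  have := hu.inner ℝ hu
  refine this.congr_fderiv ?_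
  ext w
  simp [two_smul, inner_sub_left]
  rw [real_inner_comm w x, real_inner_comm w x₀]
  rw [inner_sub_right]

end Quad

theorem strictly_convex_has_posdef_hessian (n : ℕ)
    (D : Set (EuclideanSpace ℝ (Fin n))) (f : EuclideanSpace ℝ (Fin n) → ℝ)
    (hD : IsOpen D) (hDne : D.Nonempty) (hDconv : Convex ℝ D)
    (hf : StrictConvexOn ℝ D f) (hf2 : ContDiffOn ℝ 2 f D) :
    ∃ x ∈ D, ∀ v : EuclideanSpace ℝ (Fin n), v ≠ 0 →
      0 < fderiv ℝ (fderiv ℝ f) x v v := by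
  classical
  obtain ⟨x₀, hx₀⟩ := hDne
  rcases subsingleton_or_nontrivial (EuclideanSpace ℝ (Fin n)) with hsub | hnt
  · exact ⟨x₀, hx₀, fun v hv => absurd (Subsingleton.elim v 0) hv⟩
  obtain ⟨r, hr0, hball⟩ := Metric.isOpen_iff.1 hD x₀ hx₀
  set R : ℝ := r / 2 with hRdef
  have hR0 : 0 < R := by positivity
  have hcb : closedBall x₀ R ⊆ D :=
    (closedBall_subset_ball (by simp [hRdef]; linarith)).trans hball
  have hdiff : ∀ x ∈ D, HasFDerivAt f (fderiv ℝ f x) x := fun x hx =>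
    (((hf2.contDiffAt (hD.mem_nhds hx))).differentiableAt (by norm_num)).hasFDerivAt
  set ℓ : EuclideanSpace ℝ (Fin n) →L[ℝ] ℝ := fderiv ℝ f x₀ with hℓdef
  set φ : EuclideanSpace ℝ (Fin n) → ℝ := fun x => f x - f x₀ - ℓ (x - x₀) with hφdef
  have hsD : sphere x₀ R ⊆ D := fun x hx => hcb (sphere_subset_closedBall hx)
  have hφcont : ContinuousOn φ (sphere x₀ R) := by
    apply ContinuousOn.sub
    · exact (hf2.continuousOn.mono hsD).sub continuousOn_const
    · exact (ℓ.continuous.comp (continuous_id.sub continuous_const)).continuousOn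
  have hsne : (sphere x₀ R).Nonempty := NormedSpace.sphere_nonempty.2 hR0.le
  obtain ⟨y1, hy1s, hy1min⟩ := (isCompact_sphere x₀ R).exists_isMinOn hsne hφcont
  have hy1ne : y1 ≠ x₀ := by
    intro h
    have := mem_sphere.1 hy1s
    rw [h] at this
    simp at this
    linarith
  set m : ℝ := φ y1 with hmdef
  have hm0 : 0 < m := by
    have := strictConvexOn_tangent_lt hf hx₀ (hsD hy1s) hy1ne (hdiff x₀ hx₀)
    simp only [hmdef, hφdef]
    linarith
  set s : ℝ := m / R ^ 2 with hsdef
  have hs0 : 0 < s := by positivity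
  set g : EuclideanSpace ℝ (Fin n) → ℝ := fun x => f x - ℓ x - s * (inner ℝ (x - x₀) (x - x₀) : ℝ) with hgdef
  have hgcont : ContinuousOn g (closedBall x₀ R) := by
    apply ContinuousOn.sub
    · exact (hf2.continuousOn.mono hcb).sub ℓ.continuous.continuousOn
    · exact (continuous_const.mul
        (((continuous_id.sub continuous_const).inner
          (continuous_id.sub continuous_const)))).continuousOn
  obtain ⟨c, hcmem, hcmin⟩ := (isCompact_closedBall x₀ R).exists_isMinOn
    ⟨x₀, mem_closedBall_self hR0.le⟩ hgcont
  have hgx₀ : g x₀ = f x₀ - ℓ x₀ := by simp [hgdef]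
  have hsphere_bd : ∀ x, dist x x₀ = R → g x₀ ≤ g x := by
    intro x hx
    have hxs : x ∈ sphere x₀ R := mem_sphere.2 hx
    have hφx : m ≤ φ x := isMinOn_iff.1 hy1min x hxs
    have hnorm : ‖x - x₀‖ = R := by rwa [← dist_eq_norm]
    have hinner : (inner ℝ (x - x₀) (x - x₀) : ℝ) = R ^ 2 := by
      rw [real_inner_self_eq_norm_sq, hnorm]
    have hsR : s * R ^ 2 = m := by
      rw [hsdef]; field_simp
    have hφexp : φ x = f x - ℓ x - (f x₀ - ℓ x₀) := by
      simp [hφdef, map_sub]; ring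
    rw [hgx₀, hgdef]
    simp only [hinner, hsR]
    rw [hφexp] at hφx
    linarith
  obtain ⟨c', hc'ball, hc'min⟩ : ∃ c', c' ∈ ball x₀ R ∧ IsMinOn g (closedBall x₀ R) c' := by
    have hcd : dist c x₀ ≤ R := mem_closedBall.1 hcmem
    rcases lt_or_eq_of_le hcd with hlt | heq
    · exact ⟨c, mem_ball.2 hlt, hcmin⟩
    · refine ⟨x₀, mem_ball_self hR0, ?_⟩
      intro x hx
      exact le_trans (hsphere_bd c heq) (isMinOn_iff.1 hcmin x hx)
  have hc'D : c' ∈ D := hcb (ball_subset_closedBall hc'ball)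
  have hlocal : IsLocalMin g c' :=
    hc'min.isLocalMin (mem_of_superset (isOpen_ball.mem_nhds hc'ball) ball_subset_closedBall)
  set A : EuclideanSpace ℝ (Fin n) →L[ℝ] EuclideanSpace ℝ (Fin n) →L[ℝ] ℝ := fderiv ℝ (fderiv ℝ f) c' with hAdef
  set L : EuclideanSpace ℝ (Fin n) →L[ℝ] EuclideanSpace ℝ (Fin n) →L[ℝ] ℝ := s • ((2:ℝ) • (innerSL ℝ : EuclideanSpace ℝ (Fin n) →L[ℝ] EuclideanSpace ℝ (Fin n) →L[ℝ] ℝ)) with hLdef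
  set G : EuclideanSpace ℝ (Fin n) → EuclideanSpace ℝ (Fin n) →L[ℝ] ℝ := fun x => fderiv ℝ f x - ℓ - s • ((2:ℝ) • (innerSL ℝ (x - x₀)))
    with hGdef
  have hG : ∀ᶠ x in 𝓝 c', HasFDerivAt g (G x) x := by
    filter_upwards [hD.mem_nhds hc'D] with x hx
    exact ((hdiff x hx).sub ℓ.hasFDerivAt).sub ((hasFDerivAt_quad x₀ x).const_mul s)
  have hH : HasFDerivAt G (A - 0 - L) c' := by
    have hA : HasFDerivAt (fderiv ℝ f) A c' := by
      have h2 : ContDiffAt ℝ 1 (fderiv ℝ f) c' :=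
        (hf2.contDiffAt (hD.mem_nhds hc'D)).fderiv_right (by norm_num)
      exact (h2.differentiableAt (by norm_num)).hasFDerivAt
    have hquad : HasFDerivAt (fun x : EuclideanSpace ℝ (Fin n) => s • ((2:ℝ) • (innerSL ℝ (x - x₀)))) L c' := by
      have heq : (fun x : EuclideanSpace ℝ (Fin n) => s • ((2:ℝ) • (innerSL ℝ (x - x₀)))) = fun x => L x - L x₀ := by
        funext x
        simp [hLdef, ContinuousLinearMap.smul_apply, map_sub, smul_sub]
      rw [heq]
      exact L.hasFDerivAt.sub_const (L x₀)
    exact (hA.sub (hasFDerivAt_const ℓ c')).sub hquad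
  refine ⟨c', hc'D, fun v hv => ?_⟩
  have hpsd : 0 ≤ (A - 0 - L) v v := isLocalMin_second_psd hG hH hlocal v
  have hLvv : (A - 0 - L) v v = A v v - s * (2 * ‖v‖ ^ 2) := by
    have hL1 : (L v) v = s * (2 * ‖v‖ ^ 2) := by
      rw [hLdef]
      simp only [ContinuousLinearMap.smul_apply, innerSL_apply_apply, smul_eq_mul,
        real_inner_self_eq_norm_sq]
      exact congrArg (fun t => s * (2 * t)) (real_inner_self_eq_norm_sq v)
    simp only [ContinuousLinearMap.sub_apply, ContinuousLinearMap.zero_apply, hL1]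
    ring
  have hv0 : 0 < ‖v‖ := norm_pos_iff.2 hv
  rw [hLvv] at hpsd
  have h2 : 0 < 2 * ‖v‖ ^ 2 := mul_pos two_pos (pow_pos hv0 2)
  have h3 : 0 < s * (2 * ‖v‖ ^ 2) := mul_pos hs0 h2
  linarith
end

section
/- Let Ω ⊆ ℝⁿ be an open convex set with one-dimensional asymptotic cone spanned by a unit vector v, and suppose every section Ω ∩ (x + ℝv) for x ∈ Ω equals s(x) + {t v | t > 0} for a unique boundary point s(x). Then the map s : Ω → ∂Ω is continuous. -/
open Set

/-- The asymptotic cone of a convex set. -/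
def asymptoticCone' {n : ℕ} (Ω : Set (EuclideanSpace ℝ (Fin n))) : Set (EuclideanSpace ℝ (Fin n)) :=
  {u | ∀ x ∈ Ω, ∀ t : ℝ, 0 ≤ t → x + t • u ∈ Ω}

theorem basepoint_map_continuous {n : ℕ}
    (Ω : Set (EuclideanSpace ℝ (Fin n))) (hΩ : IsOpen Ω) (hconv : Convex ℝ Ω)
    (v : EuclideanSpace ℝ (Fin n)) (hv : ‖v‖ = 1)
    (hAC : asymptoticCone' Ω = {u | ∃ t : ℝ, 0 ≤ t ∧ u = t • v})
    (s : EuclideanSpace ℝ (Fin n) → EuclideanSpace ℝ (Fin n))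
    (hs : ∀ x ∈ Ω, s x ∈ frontier Ω ∧
      Ω ∩ {y | ∃ t : ℝ, y = x + t • v} = {y | ∃ t : ℝ, 0 < t ∧ y = s x + t • v}) :
    ContinuousOn s Ω := by
  have hv0 : v ≠ 0 := by
    intro h; rw [h, norm_zero] at hv; norm_num at hv
  have cancel : ∀ a b : ℝ, a • v = b • v → a = b := fun a b h =>
    smul_left_injective ℝ hv0 h
  -- key structural fact
  have key : ∀ x ∈ Ω, ∃ τ : ℝ, 0 < τ ∧ x = s x + τ • v ∧
      ∀ t : ℝ, x + t • v ∈ Ω ↔ -τ < t := by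
    intro x hx
    obtain ⟨hfr, hset⟩ := hs x hx
    have hxmem : x ∈ Ω ∩ {y | ∃ t : ℝ, y = x + t • v} := ⟨hx, 0, by simp⟩
    rw [hset] at hxmem
    obtain ⟨τ, hτ, hxeq⟩ := hxmem
    refine ⟨τ, hτ, hxeq, fun t => ?_⟩
    have hline : x + t • v = s x + (τ + t) • v := by
      nth_rw 1 [hxeq]; rw [add_smul]; abel
    constructor
    · intro h
      have hmem : x + t • v ∈ Ω ∩ {y | ∃ t' : ℝ, y = x + t' • v} := ⟨h, t, rfl⟩
      rw [hset] at hmem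
      obtain ⟨u, hu, heq⟩ := hmem
      have : (τ + t) • v = u • v := by
        have := hline.symm.trans heq
        exact add_left_cancel this
      have := cancel _ _ this
      linarith
    · intro h
      have hmem : x + t • v ∈ {y | ∃ u : ℝ, 0 < u ∧ y = s x + u • v} :=
        ⟨τ + t, by linarith, hline⟩
      rw [← hset] at hmem
      exact hmem.1
  intro x₀ hx₀
  rw [Metric.continuousWithinAt_iff]
  intro ε hε
  obtain ⟨τ₀, hτ₀, hx₀eq, hiff₀⟩ := key x₀ hx₀
  set ε' : ℝ := ε / 3 with hε'def
  have hε' : 0 < ε' := by positivity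
  -- point strictly inside, above the basepoint
  have hp₁ : x₀ + (ε' - τ₀) • v ∈ Ω := (hiff₀ _).mpr (by linarith)
  obtain ⟨δ₁, hδ₁, hball₁⟩ := Metric.isOpen_iff.mp hΩ _ hp₁
  -- point outside the closure, below the basepoint
  have hq : x₀ + (-(τ₀ + ε')) • v ∉ closure Ω := by
    intro hqcl
    have hm : x₀ + (-(τ₀ + ε' / 2)) • v ∈ interior Ω := by
      apply hconv.openSegment_interior_closure_subset_interior
        (x := x₀) (y := x₀ + (-(τ₀ + ε')) • v)
        (by rwa [hΩ.interior_eq]) hqcl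
      refine ⟨1 - (τ₀ + ε' / 2) / (τ₀ + ε'), (τ₀ + ε' / 2) / (τ₀ + ε'), ?_, ?_, by ring, ?_⟩
      · have : (τ₀ + ε' / 2) / (τ₀ + ε') < 1 := by
          rw [div_lt_one (by linarith)]; linarith
        linarith
      · positivity
      · rw [smul_add, smul_smul]
        have hne : τ₀ + ε' ≠ 0 := by positivity
        have : (τ₀ + ε' / 2) / (τ₀ + ε') * -(τ₀ + ε') = -(τ₀ + ε' / 2) := by
          field_simp
        rw [this]
        module
    rw [hΩ.interior_eq, hiff₀] at hm
    linarith
  have hopen : IsOpen (closure Ω)ᶜ := isClosed_closure.isOpen_compl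
  obtain ⟨δ₂, hδ₂, hball₂⟩ := Metric.isOpen_iff.mp hopen _ hq
  refine ⟨min δ₁ (min δ₂ ε'), by positivity, fun x hx hdist => ?_⟩
  obtain ⟨τ, hτ, hxeq, hiff⟩ := key x hx
  have hd1 : dist x x₀ < δ₁ := lt_of_lt_of_le hdist (min_le_left _ _)
  have hd2 : dist x x₀ < δ₂ := lt_of_lt_of_le hdist ((min_le_right _ _).trans (min_le_left _ _))
  have hd3 : dist x x₀ < ε' := lt_of_lt_of_le hdist ((min_le_right _ _).trans (min_le_right _ _))
  -- lower bound on τ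
  have hlow : τ₀ - ε' < τ := by
    have hmem : x + (ε' - τ₀) • v ∈ Ω := by
      apply hball₁
      rw [Metric.mem_ball]
      calc dist (x + (ε' - τ₀) • v) (x₀ + (ε' - τ₀) • v) = dist x x₀ := by
            simp [dist_eq_norm]
        _ < δ₁ := hd1
    have := (hiff _).mp hmem
    linarith
  -- upper bound on τ
  have hupp : τ ≤ τ₀ + ε' := by
    by_contra hc
    push_neg at hc
    have hmem : x + (-(τ₀ + ε')) • v ∈ Ω := (hiff _).mpr (by linarith)
    have : x + (-(τ₀ + ε')) • v ∈ (closure Ω)ᶜ := by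
      apply hball₂
      rw [Metric.mem_ball]
      calc dist (x + (-(τ₀ + ε')) • v) (x₀ + (-(τ₀ + ε')) • v) = dist x x₀ := by
            simp [dist_eq_norm]
        _ < δ₂ := hd2
    exact this (subset_closure hmem)
  -- conclude
  have hsx : s x = x - τ • v := eq_sub_of_add_eq hxeq.symm
  have hsx₀ : s x₀ = x₀ - τ₀ • v := eq_sub_of_add_eq hx₀eq.symm
  rw [hsx, hsx₀, dist_eq_norm]
  have heq : (x - τ • v) - (x₀ - τ₀ • v) = (x - x₀) + (τ₀ - τ) • v := by
    rw [sub_smul]; abel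
  rw [heq]
  calc ‖(x - x₀) + (τ₀ - τ) • v‖ ≤ ‖x - x₀‖ + ‖(τ₀ - τ) • v‖ := norm_add_le _ _
    _ = ‖x - x₀‖ + |τ₀ - τ| := by rw [norm_smul, hv, mul_one, Real.norm_eq_abs]
    _ < ε' + ε' + ε' := by
        have h1 : ‖x - x₀‖ < ε' := by rwa [← dist_eq_norm]
        have h2 : |τ₀ - τ| ≤ ε' := abs_le.mpr ⟨by linarith, by linarith⟩
        linarith
    _ = ε := by rw [hε'def]; ring
end
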